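/- The bounding number 𝔟 is at most unif(ℳ), the least cardinality of a non-meager subset of Baire space: 𝔟 ≤ unif(ℳ). -/
import Mathlib

open Cardinal Set Filter

/-- `g` eventually majorizes `f`. -/
def EvMaj (g f : ℕ → ℕ) : Prop := ∀ᶠ n in Filter.atTop, f n < g n

/-- The bounding number 𝔟. -/
noncomputable def boundNum : Cardinal :=
  sInf {c : Cardinal | ∃ B : Set (ℕ → ℕ),
    (∀ g : ℕ → ℕ, ∃ f ∈ B, ¬ EvMaj g f) ∧ c = #B}

/-- The uniformity of the meager ideal: least cardinality of a non-meager set. -/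
noncomputable def unifMeager (X : Type) [TopologicalSpace X] : Cardinal :=
  sInf {c : Cardinal | ∃ S : Set X, ¬ IsMeagre S ∧ c = #S}

lemma closed_piece (g : ℕ → ℕ) (N : ℕ) :
    IsClosed {f : ℕ → ℕ | ∀ n ≥ N, f n < g n} := by
  have : {f : ℕ → ℕ | ∀ n ≥ N, f n < g n} =
      ⋂ n ∈ {n | n ≥ N}, (fun f : ℕ → ℕ => f n) ⁻¹' {m | m < g n} := by
    ext f; simp [Set.mem_iInter]
  rw [this]
  exact isClosed_biInter fun n _ => (isClosed_discrete _).preimage (continuous_apply n)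

lemma interior_piece (g : ℕ → ℕ) (N : ℕ) :
    interior {f : ℕ → ℕ | ∀ n ≥ N, f n < g n} = ∅ := by
  classical
  by_contra h
  obtain ⟨f, hf⟩ := Set.nonempty_iff_ne_empty.2 h
  have hmem : {f : ℕ → ℕ | ∀ n ≥ N, f n < g n} ∈ nhds f :=
    mem_nhds_iff.2 ⟨_, interior_subset, isOpen_interior, hf⟩
  rw [nhds_pi, Filter.mem_pi] at hmem
  obtain ⟨I, hIfin, t, ht, hsub⟩ := hmem
  obtain ⟨M, hM⟩ := hIfin.bddAbove
  set n := max (M + 1) N with hn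
  have hnI : n ∉ I := fun hnI => by
    have := hM hnI
    omega
  set h' : ℕ → ℕ := fun m => if m ∈ I then f m else g m with hh'
  have hh'mem : h' ∈ I.pi t := by
    intro i hi
    simp only [hh', if_pos hi]
    have := ht i
    simpa [nhds_discrete] using this
  have := hsub hh'mem n (le_max_right _ _)
  simp only [hh', if_neg hnI] at this
  omega

lemma meagre_evmaj (g : ℕ → ℕ) : IsMeagre {f : ℕ → ℕ | EvMaj g f} := by
  have : {f : ℕ → ℕ | EvMaj g f} = ⋃ N, {f : ℕ → ℕ | ∀ n ≥ N, f n < g n} := by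
    ext f
    simp [EvMaj, Filter.eventually_atTop, Set.mem_iUnion]
  rw [this]
  refine isMeagre_iUnion fun N => ?_
  rw [isMeagre_iff_countable_union_isNowhereDense]
  refine ⟨{{f : ℕ → ℕ | ∀ n ≥ N, f n < g n}}, ?_, Set.countable_singleton _, ?_⟩
  · rintro t rfl
    rw [(closed_piece g N).isNowhereDense_iff]
    exact interior_piece g N
  · simp

lemma not_meagre_univ : ¬ IsMeagre (Set.univ : Set (ℕ → ℕ)) := by
  intro h
  rw [IsMeagre, Set.compl_univ] at h
  have : Dense (∅ : Set (ℕ → ℕ)) := dense_of_mem_residual h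
  simpa using this.nonempty

theorem boundNum_le_unifMeager : boundNum ≤ unifMeager (ℕ → ℕ) := by
  refine le_csInf ⟨#(Set.univ : Set (ℕ → ℕ)), Set.univ, not_meagre_univ, rfl⟩ ?_
  rintro c ⟨S, hS, rfl⟩
  refine csInf_le' ⟨S, fun g => ?_, rfl⟩
  by_contra h
  push_neg at h
  exact hS ((meagre_evmaj g).mono fun f hf => h f hf)
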